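/- Let (R, μ, A) be an averaging algebra over a field k, and let (μ_t, A_t) and (μ'_t, A'_t) be two 1-parameter formal deformations of (R, μ, A), given by families (μ_i), (A_i), (μ'_i), (A'_i) with μ_0 = μ'_0 = μ and A_0 = A'_0 = A. Suppose (φ_i)_{i≥0} is a family of k-linear maps R → R with φ_0 = id such that for every n ≥ 0 and all x, y ∈ R: Σ_{i+j=n} φ_i(μ'_j(x,y)) = Σ_{i+j+k=n} μ_i(φ_j(x), φ_k(y)) and Σ_{i+j=n} φ_i(A'_j(x)) = Σ_{i+j=n} A_i(φ_j(x)) (i.e., φ_t = Σ φ_i t^i is a formal isomorphism). Then for all x, y ∈ R: μ'_1(x,y) = μ_1(x,y) + x·φ_1(y) − φ_1(xy) + φ_1(x)·y, and A'_1(x) = A_1(x) + A(φ_1(x)) − φ_1(A(x)); that is, the infinitesimals (μ'_1, A'_1) and (μ_1, A_1) differ by the coboundary of φ_1. -/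

import Mathlib

/-- The conditions for a pair of families `(μ_i)`, `(A_i)` to define a 1-parameter formal
deformation `(Σ μ_i t^i, Σ A_i t^i)` of an averaging algebra structure on `R[[t]]`. -/
def IsAvgDeformation {k : Type*} [Field k] {R : Type*} [Ring R] [Algebra k R]
    (m : ℕ → R →ₗ[k] R →ₗ[k] R) (a : ℕ → R →ₗ[k] R) : Prop :=
  (∀ (n : ℕ) (x y z : R),
      ∑ p ∈ Finset.HasAntidiagonal.antidiagonal n, m p.1 (m p.2 x y) z
        = ∑ p ∈ Finset.HasAntidiagonal.antidiagonal n, m p.1 x (m p.2 y z)) ∧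
  (∀ (n : ℕ) (x y : R),
      ∑ v ∈ Finset.Nat.antidiagonalTuple 3 n, m (v 2) (a (v 0) x) (a (v 1) y)
        = ∑ v ∈ Finset.Nat.antidiagonalTuple 3 n, a (v 2) (m (v 1) (a (v 0) x) y)) ∧
  (∀ (n : ℕ) (x y : R),
      ∑ v ∈ Finset.Nat.antidiagonalTuple 3 n, m (v 2) (a (v 0) x) (a (v 1) y)
        = ∑ v ∈ Finset.Nat.antidiagonalTuple 3 n, a (v 2) (m (v 1) x (a (v 0) y)))

/-- If `φ_t = Σ φ_i t^i` is a formal isomorphism between two 1-parameter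
formal deformations `(μ'_t, A'_t)` and `(μ_t, A_t)` of an averaging algebra `(R, μ, A)`,
then the infinitesimals differ by the coboundary of `φ_1`. -/
theorem equivalent_deformations_infinitesimal
    (k : Type*) [Field k] (R : Type*) [Ring R] [Algebra k R]
    (A : R →ₗ[k] R)
    -- `(R, μ, A)` is an averaging algebra
    (havg1 : ∀ x y : R, A x * A y = A (x * A y))
    (havg2 : ∀ x y : R, A x * A y = A (A x * y))
    -- two 1-parameter formal deformations of `(R, μ, A)`
    (m m' : ℕ → R →ₗ[k] R →ₗ[k] R) (a a' : ℕ → R →ₗ[k] R)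
    (hm0 : ∀ x y : R, m 0 x y = x * y) (hm'0 : ∀ x y : R, m' 0 x y = x * y)
    (ha0 : a 0 = A) (ha'0 : a' 0 = A)
    (hdef : IsAvgDeformation m a) (hdef' : IsAvgDeformation m' a')
    -- a formal isomorphism `φ_t : (R[[t]], μ'_t, A'_t) → (R[[t]], μ_t, A_t)`
    (φ : ℕ → R →ₗ[k] R) (hφ0 : φ 0 = LinearMap.id)
    (hiso1 : ∀ (n : ℕ) (x y : R),
      ∑ p ∈ Finset.HasAntidiagonal.antidiagonal n, φ p.1 (m' p.2 x y)
        = ∑ v ∈ Finset.Nat.antidiagonalTuple 3 n, m (v 0) (φ (v 1) x) (φ (v 2) y))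
    (hiso2 : ∀ (n : ℕ) (x : R),
      ∑ p ∈ Finset.HasAntidiagonal.antidiagonal n, φ p.1 (a' p.2 x)
        = ∑ p ∈ Finset.HasAntidiagonal.antidiagonal n, a p.1 (φ p.2 x)) :
    (∀ x y : R, m' 1 x y = m 1 x y + x * φ 1 y - φ 1 (x * y) + φ 1 x * y) ∧
    (∀ x : R, a' 1 x = a 1 x + A (φ 1 x) - φ 1 (A x)) := by
  have hset : Finset.Nat.antidiagonalTuple 3 1 = {![1,0,0],![0,1,0],![0,0,1]} := by decide
  have hpair : Finset.HasAntidiagonal.antidiagonal 1 = ({(0,1),(1,0)} : Finset (ℕ × ℕ)) := by decide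
  constructor
  · intro x y
    have h1 := hiso1 1 x y
    rw [hset, hpair] at h1
    rw [Finset.sum_insert (by decide), Finset.sum_singleton,
      Finset.sum_insert (by decide), Finset.sum_insert (by decide),
      Finset.sum_singleton] at h1
    simp [hφ0, hm0, hm'0] at h1
    rw [eq_sub_of_add_eq h1]
    abel
  · intro x
    have h2 := hiso2 1 x
    rw [hpair] at h2
    rw [Finset.sum_insert (by decide), Finset.sum_singleton,
      Finset.sum_insert (by decide), Finset.sum_singleton] at h2
    simp [hφ0, ha0, ha'0] at h2
    rw [eq_sub_of_add_eq h2]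
    abel
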